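/- Let X, Y be finite sets, V a conditional pmf from X to Y, and p_X, p̃_X pmfs on X with |p̃_X(x) - p_X(x)| ≤ ξ for all x, where 0 < ξ ≤ 1/(|X|·e). With p_Y, p̃_Y the corresponding output marginals under V, we have |D(p_X·V ‖ p_X × p_Y) - D(p̃_X·V ‖ p̃_X × p̃_Y)| ≤ ξ·|X|·log|Y| + ξ·|X|·|Y|·log(1/(ξ·|X|)). -/

import Mathlib

open Real Finset


lemma aux_phi_mono {t δ : ℝ} (ht : 0 < t) (htδ : t ≤ δ) (hδ : 1 ≤ Real.log (1/δ)) :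
    -(t * Real.log t) ≤ δ * Real.log (1/δ) := by
  have hδ0 : 0 < δ := lt_of_lt_of_le ht htδ
  have h1 : -Real.log t = Real.log (δ/t) + Real.log (1/δ) := by
    rw [← Real.log_mul (by positivity) (by positivity)]
    rw [show δ/t * (1/δ) = t⁻¹ by field_simp, Real.log_inv]
  have h2 : Real.log (δ/t) ≤ δ/t - 1 := Real.log_le_sub_one_of_pos (by positivity)
  have h3 : t * Real.log (δ/t) ≤ δ - t := by
    have := mul_le_mul_of_nonneg_left h2 ht.le
    have ht' : t * (δ/t - 1) = δ - t := by field_simp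
    linarith
  have h4 : (δ - t) ≤ (δ - t) * Real.log (1/δ) := by nlinarith
  calc -(t * Real.log t) = t * (-Real.log t) := by ring
    _ = t * Real.log (δ/t) + t * Real.log (1/δ) := by rw [h1]; ring
    _ ≤ (δ - t) + t * Real.log (1/δ) := by linarith
    _ ≤ (δ - t) * Real.log (1/δ) + t * Real.log (1/δ) := by linarith
    _ = δ * Real.log (1/δ) := by ring

lemma aux_phi_cont {a b δ : ℝ} (ha0 : 0 ≤ a) (hab : a ≤ b) (hb1 : b ≤ 1)
    (hd : b - a ≤ δ) (hδ0 : 0 < δ) (hδ : 1 ≤ Real.log (1/δ)) :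
    |b * Real.log b - a * Real.log a| ≤ δ * Real.log (1/δ) := by
  have hM : 0 < δ * Real.log (1/δ) := by nlinarith
  rw [abs_le]
  constructor
  · -- -(M) ≤ b log b - a log a
    rw [neg_le, neg_sub]
    rcases eq_or_lt_of_le hab with h | h
    · rw [h, sub_self]; linarith
    have ht : 0 < b - a := sub_pos.mpr h
    rcases eq_or_lt_of_le ha0 with ha | ha
    · have h0 : a * Real.log a = 0 := by rw [← ha]; simp
      rw [h0, zero_sub]
      have := aux_phi_mono (t := b) (by linarith) (by linarith) hδ
      linarith
    · have hb0 : 0 < b := lt_of_lt_of_le ha hab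
      have key1 : a * (Real.log a - Real.log b) ≤ 0 := by
        have : Real.log a ≤ Real.log b := Real.log_le_log ha hab
        nlinarith
      have key2 : -((b - a) * Real.log b) ≤ -((b - a) * Real.log (b - a)) := by
        have : Real.log (b - a) ≤ Real.log b := Real.log_le_log ht (by linarith)
        nlinarith
      have := aux_phi_mono ht hd hδ
      have expand : a * Real.log a - b * Real.log b
          = a * (Real.log a - Real.log b) - ((b - a) * Real.log b) := by ring
      linarith
  · -- b log b - a log a ≤ M
    rcases eq_or_lt_of_le ha0 with ha | ha
    · have h0 : a * Real.log a = 0 := by rw [← ha]; simp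
      rw [h0, sub_zero]
      have : b * Real.log b ≤ 0 := Real.mul_log_nonpos (by linarith) hb1
      linarith
    · have hb0 : 0 < b := lt_of_lt_of_le ha hab
      have h1 : a * (Real.log b - Real.log a) ≤ b - a := by
        have heq : Real.log b - Real.log a = Real.log (b/a) :=
          (Real.log_div (ne_of_gt hb0) (ne_of_gt ha)).symm
        rw [heq]
        have h2 : Real.log (b/a) ≤ b/a - 1 := Real.log_le_sub_one_of_pos (by positivity)
        have := mul_le_mul_of_nonneg_left h2 ha.le
        have ha' : a * (b/a - 1) = b - a := by field_simp
        linarith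
      have h3 : (b - a) * Real.log b ≤ 0 := by
        have : Real.log b ≤ 0 := Real.log_nonpos hb0.le hb1
        nlinarith
      have expand : b * Real.log b - a * Real.log a
          = (b - a) * Real.log b + a * (Real.log b - Real.log a) := by ring
      nlinarith

lemma aux_entropy_le {ι : Type*} [Fintype ι] (w : ι → ℝ) (h0 : ∀ i, 0 ≤ w i)
    (h1 : ∑ i, w i = 1) : -∑ i, w i * Real.log (w i) ≤ Real.log (Fintype.card ι) := by
  classical
  set S := Finset.univ.filter (fun i => w i ≠ 0) with hSdef
  have hsum : ∑ i ∈ S, w i = 1 := by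
    rw [hSdef, Finset.sum_filter_ne_zero]; exact h1
  have hpos : ∀ i ∈ S, 0 < w i := by
    intro i hi
    rw [hSdef, Finset.mem_filter] at hi
    exact lt_of_le_of_ne (h0 i) (Ne.symm hi.2)
  have e1 : ∑ i ∈ S, w i * Real.log (w i) = ∑ i, w i * Real.log (w i) := by
    apply Finset.sum_subset (Finset.subset_univ S)
    intro i _ hi
    have hw : w i = 0 := by
      by_contra h
      exact hi (Finset.mem_filter.mpr ⟨Finset.mem_univ i, h⟩)
    simp [hw]
  have hre : -∑ i, w i * Real.log (w i) = ∑ i ∈ S, w i * Real.log ((w i)⁻¹) := by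
    rw [← e1, ← Finset.sum_neg_distrib]
    exact Finset.sum_congr rfl fun i _ => by rw [Real.log_inv]; ring
  have jensen := (strictConcaveOn_log_Ioi.concaveOn).le_map_sum
    (t := S) (w := w) (p := fun i => (w i)⁻¹)
    (fun i hi => (hpos i hi).le) hsum
    (fun i hi => Set.mem_Ioi.mpr (inv_pos.mpr (hpos i hi)))
  simp only [smul_eq_mul] at jensen
  have e2 : ∑ i ∈ S, w i * (w i)⁻¹ = (S.card : ℝ) := by
    rw [Finset.sum_congr rfl fun i hi => mul_inv_cancel₀ (ne_of_gt (hpos i hi))]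
    simp
  rw [e2] at jensen
  have hne : S.Nonempty := Finset.nonempty_of_sum_ne_zero (by rw [hsum]; norm_num)
  have hcard : (S.card : ℝ) ≤ (Fintype.card ι : ℝ) := by
    exact_mod_cast Finset.card_le_univ S
  have hlog : Real.log (S.card) ≤ Real.log (Fintype.card ι) :=
    Real.log_le_log (by exact_mod_cast hne.card_pos) hcard
  rw [hre]
  exact le_trans jensen hlog
open Real Finset

/-- Continuity of mutual information in the input (Lemma 6, part 2): if
`|p̃_X(x) - p_X(x)| ≤ ξ` for all `x`, with `0 < ξ ≤ 1/(|X|·e)`, then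
`|D(p_X·V ‖ p_X × p_Y) - D(p̃_X·V ‖ p̃_X × p̃_Y)| ≤
  ξ·|X|·log|Y| + ξ·|X|·|Y|·log(1/(ξ·|X|))`. -/
theorem stmt11 {X Y : Type*} [Fintype X] [Fintype Y] (ξ : ℝ)
    (hξ0 : 0 < ξ) (hξ1 : ξ ≤ 1 / ((Fintype.card X : ℝ) * Real.exp 1))
    (V : X → Y → ℝ) (hV : ∀ x, (∀ y, 0 ≤ V x y) ∧ ∑ y, V x y = 1)
    (pX pXt : X → ℝ)
    (hpX0 : ∀ x, 0 ≤ pX x) (hpX1 : ∑ x, pX x = 1)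
    (hpXt0 : ∀ x, 0 ≤ pXt x) (hpXt1 : ∑ x, pXt x = 1)
    (hclose : ∀ x, |pXt x - pX x| ≤ ξ) :
    |(∑ x, ∑ y, pX x * V x y *
        Real.log ((pX x * V x y) / (pX x * ∑ x', pX x' * V x' y))) -
      ∑ x, ∑ y, pXt x * V x y *
        Real.log ((pXt x * V x y) / (pXt x * ∑ x', pXt x' * V x' y))| ≤
      ξ * (Fintype.card X : ℝ) * Real.log (Fintype.card Y : ℝ) +
        ξ * (Fintype.card X : ℝ) * (Fintype.card Y : ℝ) *
          Real.log (1/(ξ * (Fintype.card X : ℝ))) := by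
  classical
  -- nonemptiness
  have hXne : Nonempty X := by
    by_contra h
    rw [not_nonempty_iff] at h
    rw [Finset.univ_eq_empty, Finset.sum_empty] at hpX1
    norm_num at hpX1
  haveI := hXne
  obtain ⟨x0⟩ := hXne
  have hYne : Nonempty Y := by
    by_contra h
    rw [not_nonempty_iff] at h
    have := (hV x0).2
    rw [Finset.univ_eq_empty, Finset.sum_empty] at this
    norm_num at this
  haveI := hYne
  have hcX : (0:ℝ) < Fintype.card X := by exact_mod_cast Fintype.card_pos
  have hcY1 : (1:ℝ) ≤ Fintype.card Y := by exact_mod_cast Fintype.card_pos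
  have hlogY : 0 ≤ Real.log (Fintype.card Y) := Real.log_nonneg hcY1
  set δ : ℝ := ξ * (Fintype.card X : ℝ) with hδdef
  have hδ0 : 0 < δ := by positivity
  have hδ : 1 ≤ Real.log (1/δ) := by
    rw [Real.le_log_iff_exp_le (by positivity)]
    rw [le_div_iff₀ hδ0]
    have h := (le_div_iff₀ (by positivity : (0:ℝ) < (Fintype.card X : ℝ) * Real.exp 1)).mp hξ1
    nlinarith [Real.exp_pos 1]
  -- V bounds
  have hV0 : ∀ x y, 0 ≤ V x y := fun x => (hV x).1
  have hV1 : ∀ x y, V x y ≤ 1 := by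
    intro x y
    rw [← (hV x).2]
    exact Finset.single_le_sum (fun y' _ => hV0 x y') (Finset.mem_univ y)
  -- the key rewriting of the mutual information
  have key : ∀ p : X → ℝ, (∀ x, 0 ≤ p x) →
      (∑ x, ∑ y, p x * V x y *
        Real.log ((p x * V x y) / (p x * ∑ x', p x' * V x' y)))
      = (∑ x, (p x) * ∑ y, V x y * Real.log (V x y))
        - ∑ y, (∑ x, p x * V x y) * Real.log (∑ x, p x * V x y) := by
    intro p hp
    have hterm : ∀ x y, p x * V x y *
        Real.log ((p x * V x y) / (p x * ∑ x', p x' * V x' y))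
        = p x * (V x y * Real.log (V x y))
          - p x * V x y * Real.log (∑ x', p x' * V x' y) := by
      intro x y
      by_cases hpx : p x = 0
      · simp [hpx]
      by_cases hv : V x y = 0
      · simp [hv]
      have hpx' : 0 < p x := lt_of_le_of_ne (hp x) (Ne.symm hpx)
      have hv' : 0 < V x y := lt_of_le_of_ne (hV0 x y) (Ne.symm hv)
      have hpY : 0 < ∑ x', p x' * V x' y :=
        lt_of_lt_of_le (by positivity)
          (Finset.single_le_sum (fun i _ => mul_nonneg (hp i) (hV0 i y)) (Finset.mem_univ x))
      rw [show (p x * V x y) / (p x * ∑ x', p x' * V x' y)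
            = V x y / (∑ x', p x' * V x' y) from mul_div_mul_left _ _ hpx]
      rw [Real.log_div (ne_of_gt hv') (ne_of_gt hpY)]
      ring
    calc (∑ x, ∑ y, p x * V x y *
          Real.log ((p x * V x y) / (p x * ∑ x', p x' * V x' y)))
        = ∑ x, ∑ y, (p x * (V x y * Real.log (V x y))
            - p x * V x y * Real.log (∑ x', p x' * V x' y)) := by
          exact Finset.sum_congr rfl fun x _ => Finset.sum_congr rfl fun y _ => hterm x y
      _ = (∑ x, ∑ y, p x * (V x y * Real.log (V x y)))
            - ∑ x, ∑ y, p x * V x y * Real.log (∑ x', p x' * V x' y) := by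
          rw [← Finset.sum_sub_distrib]
          exact Finset.sum_congr rfl fun x _ => Finset.sum_sub_distrib _ _
      _ = (∑ x, (p x) * ∑ y, V x y * Real.log (V x y))
            - ∑ y, (∑ x, p x * V x y) * Real.log (∑ x, p x * V x y) := by
          congr 1
          · exact Finset.sum_congr rfl fun x _ => (Finset.mul_sum _ _ _).symm
          · rw [Finset.sum_comm]
            exact Finset.sum_congr rfl fun y _ => (Finset.sum_mul _ _ _).symm
  rw [key pX hpX0, key pXt hpXt0]
  set s : X → ℝ := fun x => ∑ y, V x y * Real.log (V x y) with hsdef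
  set pY : Y → ℝ := fun y => ∑ x, pX x * V x y with hpYdef
  set qY : Y → ℝ := fun y => ∑ x, pXt x * V x y with hqYdef
  -- entropy bound on s
  have hs : ∀ x, |s x| ≤ Real.log (Fintype.card Y) := by
    intro x
    have h1 : s x ≤ 0 := by
      apply Finset.sum_nonpos
      intro y _
      exact Real.mul_log_nonpos (hV0 x y) (hV1 x y)
    rw [abs_of_nonpos h1]
    have := aux_entropy_le (V x) (hV0 x) (hV x).2
    calc -s x = -∑ y, V x y * Real.log (V x y) := by rw [hsdef]
      _ ≤ Real.log (Fintype.card Y) := this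
  -- marginal bounds
  have hmarg : ∀ (p : X → ℝ), (∀ x, 0 ≤ p x) → (∑ x, p x = 1) →
      ∀ y, 0 ≤ (∑ x, p x * V x y) ∧ (∑ x, p x * V x y) ≤ 1 := by
    intro p hp hp1 y
    constructor
    · exact Finset.sum_nonneg fun x _ => mul_nonneg (hp x) (hV0 x y)
    · calc ∑ x, p x * V x y ≤ ∑ x, p x := by
            apply Finset.sum_le_sum
            intro x _
            nlinarith [hp x, hV0 x y, hV1 x y]
      _ = 1 := hp1
  have hclose' : ∀ y, |pY y - qY y| ≤ δ := by
    intro y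
    have : pY y - qY y = ∑ x, (pX x - pXt x) * V x y := by
      rw [hpYdef, hqYdef, ← Finset.sum_sub_distrib]
      exact Finset.sum_congr rfl fun x _ => by ring
    rw [this]
    calc |∑ x, (pX x - pXt x) * V x y| ≤ ∑ x, |(pX x - pXt x) * V x y| :=
          Finset.abs_sum_le_sum_abs _ _
      _ ≤ ∑ x : X, ξ := by
          apply Finset.sum_le_sum
          intro x _
          rw [abs_mul]
          have h1 : |pX x - pXt x| ≤ ξ := by rw [abs_sub_comm]; exact hclose x
          have h2 : |V x y| ≤ 1 := by rw [abs_of_nonneg (hV0 x y)]; exact hV1 x y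
          nlinarith [abs_nonneg (pX x - pXt x), abs_nonneg (V x y)]
      _ = δ := by rw [Finset.sum_const, Finset.card_univ, nsmul_eq_mul, hδdef]; ring
  -- bound term 1
  have hA : |(∑ x, pX x * s x) - ∑ x, pXt x * s x| ≤
      ξ * (Fintype.card X : ℝ) * Real.log (Fintype.card Y) := by
    rw [← Finset.sum_sub_distrib]
    calc |∑ x, (pX x * s x - pXt x * s x)| ≤ ∑ x, |pX x * s x - pXt x * s x| :=
          Finset.abs_sum_le_sum_abs _ _
      _ ≤ ∑ x : X, ξ * Real.log (Fintype.card Y) := by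
          apply Finset.sum_le_sum
          intro x _
          rw [show pX x * s x - pXt x * s x = (pX x - pXt x) * s x from by ring, abs_mul]
          have h1 : |pX x - pXt x| ≤ ξ := by rw [abs_sub_comm]; exact hclose x
          have h2 := hs x
          nlinarith [abs_nonneg (pX x - pXt x), abs_nonneg (s x)]
      _ = ξ * (Fintype.card X : ℝ) * Real.log (Fintype.card Y) := by
          rw [Finset.sum_const, Finset.card_univ, nsmul_eq_mul]; ring
  -- bound term 2
  have hC : |(∑ y, pY y * Real.log (pY y)) - ∑ y, qY y * Real.log (qY y)| ≤
      (Fintype.card Y : ℝ) * (δ * Real.log (1/δ)) := by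
    rw [← Finset.sum_sub_distrib]
    calc |∑ y, (pY y * Real.log (pY y) - qY y * Real.log (qY y))|
        ≤ ∑ y, |pY y * Real.log (pY y) - qY y * Real.log (qY y)| :=
          Finset.abs_sum_le_sum_abs _ _
      _ ≤ ∑ _y : Y, δ * Real.log (1/δ) := by
          apply Finset.sum_le_sum
          intro y _
          have hp := hmarg pX hpX0 hpX1 y
          have hq := hmarg pXt hpXt0 hpXt1 y
          have hcl := hclose' y
          rcases le_total (pY y) (qY y) with h | h
          · rw [abs_sub_comm]
            exact aux_phi_cont hp.1 h hq.2 (by rw [abs_sub_comm, abs_of_nonneg (by linarith)] at hcl; linarith) hδ0 hδ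
          · exact aux_phi_cont hq.1 h hp.2 (by rw [abs_of_nonneg (by linarith)] at hcl; linarith) hδ0 hδ
      _ = (Fintype.card Y : ℝ) * (δ * Real.log (1/δ)) := by
          rw [Finset.sum_const, Finset.card_univ, nsmul_eq_mul]
  -- combine
  have decomp : ((∑ x, pX x * s x) - ∑ y, pY y * Real.log (pY y))
      - ((∑ x, pXt x * s x) - ∑ y, qY y * Real.log (qY y))
      = ((∑ x, pX x * s x) - ∑ x, pXt x * s x)
        - ((∑ y, pY y * Real.log (pY y)) - ∑ y, qY y * Real.log (qY y)) := by ring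
  rw [decomp]
  calc |((∑ x, pX x * s x) - ∑ x, pXt x * s x)
        - ((∑ y, pY y * Real.log (pY y)) - ∑ y, qY y * Real.log (qY y))|
      ≤ |(∑ x, pX x * s x) - ∑ x, pXt x * s x|
        + |(∑ y, pY y * Real.log (pY y)) - ∑ y, qY y * Real.log (qY y)| := abs_sub _ _
    _ ≤ ξ * (Fintype.card X : ℝ) * Real.log (Fintype.card Y)
        + (Fintype.card Y : ℝ) * (δ * Real.log (1/δ)) := add_le_add hA hC
    _ = ξ * (Fintype.card X : ℝ) * Real.log (Fintype.card Y : ℝ) +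
        ξ * (Fintype.card X : ℝ) * (Fintype.card Y : ℝ) *
          Real.log (1/(ξ * (Fintype.card X : ℝ))) := by rw [hδdef]; ring
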